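/- Let α₋₁, α₀, α₁, α₂, σ > 0 and κ, ρ > 1 with κ + 1 > 2ρ, and let q > 2. Define f(x) = α₋₁x⁻¹ − α₀ + α₁x − α₂x^κ and g(x) = σx^ρ for x > 0. Then L := sup_{x > 0} ( −α₋₁x⁻² + α₁ − α₂κx^{κ−1} + ((q−1)/2)σ²ρ²x^{2ρ−2} ) is finite, and for all x, y > 0: (x − y)(f(x) − f(y)) + ((q−1)/2)(g(x) − g(y))² ≤ L (x − y)². -/

import Mathlib

open Set intervalIntegral

set_option maxHeartbeats 1000000 in
/-- One-sided Lipschitz-plus-diffusion monotonicity estimate for the Ait-Sahalia model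
in the standard regime κ + 1 > 2ρ, with L the (finite) supremum of
f'(x) + ((q−1)/2)|g'(x)|² over x > 0. -/
theorem stmt_9 (αm1 α₀ α₁ α₂ σ κ ρ q : ℝ)
    (hm1 : 0 < αm1) (h₀ : 0 < α₀) (h₁ : 0 < α₁) (h₂ : 0 < α₂) (hσ : 0 < σ)
    (hκ : 1 < κ) (hρ : 1 < ρ) (hreg : κ + 1 > 2 * ρ) (hq : 2 < q) :
    BddAbove ((fun x : ℝ => -αm1 / x^2 + α₁ - α₂ * κ * x ^ (κ - 1)
        + ((q - 1)/2) * σ^2 * ρ^2 * x ^ (2 * ρ - 2)) '' Set.Ioi 0) ∧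
    ∀ x y : ℝ, 0 < x → 0 < y →
      (x - y) * ((αm1 * x⁻¹ - α₀ + α₁ * x - α₂ * x ^ κ)
          - (αm1 * y⁻¹ - α₀ + α₁ * y - α₂ * y ^ κ))
        + ((q - 1)/2) * (σ * x ^ ρ - σ * y ^ ρ)^2
      ≤ sSup ((fun x : ℝ => -αm1 / x^2 + α₁ - α₂ * κ * x ^ (κ - 1)
          + ((q - 1)/2) * σ^2 * ρ^2 * x ^ (2 * ρ - 2)) '' Set.Ioi 0) * (x - y)^2 := by
  have hc0 : 0 < (q - 1) / 2 := by linarith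
  set c : ℝ := (q - 1) / 2 with hcdef
  set F : ℝ → ℝ := fun v => -αm1 / v^2 + α₁ - α₂ * κ * v ^ (κ - 1)
      + c * σ^2 * ρ^2 * v ^ (2 * ρ - 2) with hFdef
  -- constants for the boundedness argument
  set a : ℝ := c * σ^2 * ρ^2 with hadef
  have ha0 : 0 < a := by positivity
  set b : ℝ := α₂ * κ with hbdef
  have hb0 : 0 < b := by positivity
  set e : ℝ := κ + 1 - 2 * ρ with hedef
  have he0 : 0 < e := by simp only [hedef]; linarith
  set R : ℝ := max 1 ((a / b) ^ (1 / e)) with hRdef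
  have hR1 : (1:ℝ) ≤ R := le_max_left _ _
  have hR0 : 0 < R := lt_of_lt_of_le one_pos hR1
  -- key pointwise bound
  have hFle : ∀ v ∈ Ioi (0:ℝ), F v ≤ α₁ + a * R ^ (2 * ρ - 2) := by
    intro v hv
    have hv0 : (0:ℝ) < v := hv
    have h2ρ : (0:ℝ) ≤ 2 * ρ - 2 := by linarith
    have hterm1 : -αm1 / v^2 ≤ 0 := by
      apply div_nonpos_of_nonpos_of_nonneg <;> nlinarith
    have hRpow : 0 ≤ a * R ^ (2 * ρ - 2) := by positivity
    rcases le_or_gt v R with hvR | hvR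
    · have hmono : v ^ (2 * ρ - 2) ≤ R ^ (2 * ρ - 2) :=
        Real.rpow_le_rpow hv0.le hvR h2ρ
      have hκpos : 0 ≤ b * v ^ (κ - 1) := by positivity
      have : a * v ^ (2 * ρ - 2) ≤ a * R ^ (2 * ρ - 2) := by
        exact mul_le_mul_of_nonneg_left hmono ha0.le
      simp only [hFdef]
      linarith
    · -- v > R : the negative κ-term dominates
      have hve : a ≤ b * v ^ e := by
        have h1 : (a / b) ≤ R ^ e := by
          have : ((a / b) ^ (1 / e)) ^ e ≤ R ^ e :=
            Real.rpow_le_rpow (Real.rpow_nonneg (by positivity) _) (le_max_right _ _) he0.le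
          rwa [← Real.rpow_mul (by positivity), one_div_mul_cancel he0.ne', Real.rpow_one] at this
        have h2 : R ^ e ≤ v ^ e := Real.rpow_le_rpow hR0.le hvR.le he0.le
        calc a = (a / b) * b := by field_simp
        _ ≤ v ^ e * b := by nlinarith
        _ = b * v ^ e := by ring
      have hsplit : v ^ (κ - 1) = v ^ (2 * ρ - 2) * v ^ e := by
        rw [← Real.rpow_add hv0]; congr 1; simp only [hedef]; ring
      have hkey : a * v ^ (2 * ρ - 2) - b * v ^ (κ - 1) ≤ 0 := by
        rw [hsplit]
        have hvp : 0 ≤ v ^ (2 * ρ - 2) := Real.rpow_nonneg hv0.le _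
        nlinarith
      simp only [hFdef]
      have : α₂ * κ * v ^ (κ - 1) = b * v ^ (κ - 1) := by rw [hbdef]
      nlinarith
  have hBdd : BddAbove (F '' Ioi 0) := by
    refine ⟨α₁ + a * R ^ (2 * ρ - 2), ?_⟩
    rintro w ⟨v, hv, rfl⟩
    exact hFle v hv
  refine ⟨hBdd, ?_⟩
  set L : ℝ := sSup (F '' Ioi 0) with hLdef
  have hL : ∀ v : ℝ, 0 < v → F v ≤ L :=
    fun v hv => le_csSup hBdd (mem_image_of_mem F hv)
  intro x y hx hy
  set m : ℝ := min x y with hmdef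
  have hm0 : 0 < m := lt_min hx hy
  set z : ℝ → ℝ := fun t => y + t * (x - y) with hzdef
  have hz0 : z 0 = y := by simp [hzdef]
  have hz1 : z 1 = x := by simp [hzdef]
  have hzc : Continuous z := by fun_prop
  have hzm : ∀ t ∈ Icc (0:ℝ) 1, m ≤ z t := by
    intro t ht
    have h1 : m ≤ x := min_le_left _ _
    have h2 : m ≤ y := min_le_right _ _
    have hzt : z t = (1 - t) * y + t * x := by simp only [hzdef]; ring
    have e1 : 0 ≤ (1 - t) * (y - m) :=
      mul_nonneg (by linarith [ht.2]) (by linarith)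
    have e2 : 0 ≤ t * (x - m) := mul_nonneg ht.1 (by linarith)
    rw [hzt]; nlinarith
  have hzpos : ∀ t ∈ Icc (0:ℝ) 1, 0 < z t := fun t ht => lt_of_lt_of_le hm0 (hzm t ht)
  have hzne : ∀ t ∈ Icc (0:ℝ) 1, z t ≠ 0 := fun t ht => (hzpos t ht).ne'
  have huIcc : uIcc (0:ℝ) 1 = Icc 0 1 := by
    rw [uIcc_of_le]; norm_num
  -- derivative of z
  have hzd : ∀ t : ℝ, HasDerivAt z (x - y) t := by
    intro t
    simpa [hzdef] using ((hasDerivAt_id t).mul_const (x - y)).const_add y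
  -- continuity of t ↦ (z t) ^ p on Icc 0 1
  have hzrpow : ∀ p : ℝ, ContinuousOn (fun t => (z t) ^ p) (Icc 0 1) := by
    intro p t ht
    exact ((Real.continuousAt_rpow_const (z t) p (Or.inl (hzne t ht))).comp
      hzc.continuousAt).continuousWithinAt
  -- the derivative integrands
  set fd : ℝ → ℝ := fun v => -αm1 / v^2 + α₁ - α₂ * κ * v ^ (κ - 1) with hfddef
  set gd : ℝ → ℝ := fun v => σ * ρ * v ^ (ρ - 1) with hgddef
  have hcontfd : ContinuousOn (fun t => fd (z t)) (Icc 0 1) := by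
    simp only [hfddef]
    exact ((continuousOn_const.div ((hzc.pow 2).continuousOn)
      (fun t ht => pow_ne_zero _ (hzne t ht))).add continuousOn_const).sub
      (continuousOn_const.mul (hzrpow (κ - 1)))
  have hcontgd : ContinuousOn (fun t => gd (z t)) (Icc 0 1) :=
    continuousOn_const.mul (hzrpow (ρ - 1))
  -- FTC for f
  have hfderiv : ∀ t ∈ uIcc (0:ℝ) 1,
      HasDerivAt (fun s => αm1 * (z s)⁻¹ - α₀ + α₁ * z s - α₂ * (z s) ^ κ)
        (fd (z t) * (x - y)) t := by
    intro t ht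
    rw [huIcc] at ht
    have hne := hzne t ht
    have h1 : HasDerivAt (fun s => (z s)⁻¹) (-((z t) ^ 2)⁻¹ * (x - y)) t :=
      (hasDerivAt_inv hne).comp t (hzd t)
    have h2 : HasDerivAt (fun s => (z s) ^ κ) (κ * (z t) ^ (κ - 1) * (x - y)) t :=
      (Real.hasDerivAt_rpow_const (Or.inl hne)).comp t (hzd t)
    have := (((h1.const_mul αm1).sub_const α₀).add ((hzd t).const_mul α₁)).sub
      (h2.const_mul α₂)
    refine this.congr_deriv ?_
    simp only [hfddef]
    field_simp
  have hgderiv : ∀ t ∈ uIcc (0:ℝ) 1,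
      HasDerivAt (fun s => σ * (z s) ^ ρ) (gd (z t) * (x - y)) t := by
    intro t ht
    rw [huIcc] at ht
    have h2 : HasDerivAt (fun s => (z s) ^ ρ) (ρ * (z t) ^ (ρ - 1) * (x - y)) t :=
      (Real.hasDerivAt_rpow_const (Or.inl (hzne t ht))).comp t (hzd t)
    refine (h2.const_mul σ).congr_deriv ?_
    simp only [hgddef]; ring
  have hintfd : IntervalIntegrable (fun t => fd (z t) * (x - y)) MeasureTheory.volume 0 1 := by
    apply ContinuousOn.intervalIntegrable
    rw [huIcc]; exact hcontfd.mul continuousOn_const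
  have hintgd : IntervalIntegrable (fun t => gd (z t) * (x - y)) MeasureTheory.volume 0 1 := by
    apply ContinuousOn.intervalIntegrable
    rw [huIcc]; exact hcontgd.mul continuousOn_const
  have hfint : ∫ t in (0:ℝ)..1, fd (z t) * (x - y)
      = (αm1 * x⁻¹ - α₀ + α₁ * x - α₂ * x ^ κ) - (αm1 * y⁻¹ - α₀ + α₁ * y - α₂ * y ^ κ) := by
    rw [intervalIntegral.integral_eq_sub_of_hasDerivAt hfderiv hintfd, hz0, hz1]
  have hgint : ∫ t in (0:ℝ)..1, gd (z t) * (x - y) = σ * x ^ ρ - σ * y ^ ρ := by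
    rw [intervalIntegral.integral_eq_sub_of_hasDerivAt hgderiv hintgd, hz0, hz1]
  set If : ℝ := ∫ t in (0:ℝ)..1, fd (z t) with hIf
  set Ig : ℝ := ∫ t in (0:ℝ)..1, gd (z t) with hIg
  have hfint' : (αm1 * x⁻¹ - α₀ + α₁ * x - α₂ * x ^ κ)
      - (αm1 * y⁻¹ - α₀ + α₁ * y - α₂ * y ^ κ) = If * (x - y) := by
    rw [← hfint, intervalIntegral.integral_mul_const]
  have hgint' : σ * x ^ ρ - σ * y ^ ρ = Ig * (x - y) := by
    rw [← hgint, intervalIntegral.integral_mul_const]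
  -- integrability of the undecorated integrands
  have hintf2 : IntervalIntegrable (fun t => fd (z t)) MeasureTheory.volume 0 1 :=
    ContinuousOn.intervalIntegrable (by rw [huIcc]; exact hcontfd)
  have hintg2 : IntervalIntegrable (fun t => gd (z t)) MeasureTheory.volume 0 1 :=
    ContinuousOn.intervalIntegrable (by rw [huIcc]; exact hcontgd)
  have hintgsq : IntervalIntegrable (fun t => gd (z t) ^ 2) MeasureTheory.volume 0 1 :=
    ContinuousOn.intervalIntegrable (by rw [huIcc]; exact hcontgd.pow 2)
  -- Cauchy–Schwarz: Ig² ≤ ∫ gd(z t)²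
  set Ig2 : ℝ := ∫ t in (0:ℝ)..1, gd (z t) ^ 2 with hIg2
  have hCS : Ig ^ 2 ≤ Ig2 := by
    have hnn : 0 ≤ ∫ t in (0:ℝ)..1, (gd (z t) - Ig) ^ 2 :=
      intervalIntegral.integral_nonneg (by norm_num) (fun u _ => sq_nonneg _)
    have hexp : ∫ t in (0:ℝ)..1, (gd (z t) - Ig) ^ 2
        = Ig2 - 2 * Ig * Ig + Ig ^ 2 := by
      have : (fun t => (gd (z t) - Ig) ^ 2)
          = fun t => gd (z t) ^ 2 - (2 * Ig) * gd (z t) + Ig ^ 2 := by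
        funext t; ring
      rw [this]
      rw [intervalIntegral.integral_add (hintgsq.sub (hintg2.const_mul (2 * Ig)))
        intervalIntegrable_const,
        intervalIntegral.integral_sub hintgsq (hintg2.const_mul (2 * Ig)),
        intervalIntegral.integral_const_mul, intervalIntegral.integral_const]
      simp [hIg2, hIg]
    nlinarith [hnn, hexp]
  -- pointwise bound and integral bound
  have hFz : ∀ t ∈ Icc (0:ℝ) 1, fd (z t) + c * gd (z t) ^ 2 ≤ L := by
    intro t ht
    have hv := hzpos t ht
    have hptF : fd (z t) + c * gd (z t) ^ 2 = F (z t) := by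
      simp only [hfddef, hgddef, hFdef]
      have hsq : ((z t) ^ (ρ - 1)) ^ 2 = (z t) ^ (2 * ρ - 2) := by
        rw [sq, ← Real.rpow_add hv]
        congr 1; ring
      rw [mul_pow, mul_pow, hsq]
      ring
    rw [hptF]
    exact hL _ hv
  have hIbound : If + c * Ig2 ≤ L := by
    have heq : If + c * Ig2 = ∫ t in (0:ℝ)..1, (fd (z t) + c * gd (z t) ^ 2) := by
      rw [intervalIntegral.integral_add hintf2 (hintgsq.const_mul c),
        intervalIntegral.integral_const_mul]
    rw [heq]
    calc ∫ t in (0:ℝ)..1, (fd (z t) + c * gd (z t) ^ 2)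
        ≤ ∫ _ in (0:ℝ)..1, L := by
          apply intervalIntegral.integral_mono_on (by norm_num)
            (hintf2.add (hintgsq.const_mul c)) intervalIntegrable_const hFz
      _ = L := by simp
  -- combine
  rw [hfint', hgint']
  have hsq0 : (0:ℝ) ≤ (x - y) ^ 2 := sq_nonneg _
  have h1 : (x - y) * (If * (x - y)) = If * (x - y) ^ 2 := by ring
  have h2 : c * (Ig * (x - y)) ^ 2 = c * Ig ^ 2 * (x - y) ^ 2 := by ring
  rw [h1, h2]
  have hstep : If * (x - y) ^ 2 + c * Ig ^ 2 * (x - y) ^ 2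
      ≤ (If + c * Ig2) * (x - y) ^ 2 := by
    have : c * Ig ^ 2 ≤ c * Ig2 := mul_le_mul_of_nonneg_left hCS hc0.le
    nlinarith
  calc If * (x - y) ^ 2 + c * Ig ^ 2 * (x - y) ^ 2
      ≤ (If + c * Ig2) * (x - y) ^ 2 := hstep
    _ ≤ L * (x - y) ^ 2 := mul_le_mul_of_nonneg_right hIbound hsq0
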